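/- Let C be a category with all small colimits. In Prod(C) the coproduct distributes over products: for objects ∏_{i∈I} A_i and ∏_{j∈J} B_j of Prod(C) there is an isomorphism (∏_{i∈I} A_i) ⊔ (∏_{j∈J} B_j) ≅ ∏_{(i,j)∈I×J} (A_i ⊔ B_j), where A_i ⊔ B_j denotes the coproduct in C. -/

import Mathlib

open CategoryTheory Limits

universe v u

/-- The category of formal products of objects of `C`. -/
structure FormalProd (C : Type u) [Category.{v} C] : Type (max u (v + 1)) where
  ι : Type v
  obj : ι → C

namespace FormalProd

variable {C : Type u} [Category.{v} C]

instance : Category.{v} (FormalProd C) where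
  Hom A B := Σ r : B.ι → A.ι, ∀ j : B.ι, A.obj (r j) ⟶ B.obj j
  id A := ⟨fun i => i, fun i => 𝟙 (A.obj i)⟩
  comp {A B D} f g := ⟨fun k => f.1 (g.1 k), fun k => f.2 (g.1 k) ≫ g.2 k⟩
  id_comp f := by obtain ⟨r, φ⟩ := f; simp
  comp_id f := by obtain ⟨r, φ⟩ := f; simp
  assoc f g h := by simp

/-- The index map of a morphism of formal products. -/
def Hom.index {A B : FormalProd C} (f : A ⟶ B) : B.ι → A.ι := f.1

/-- The components of a morphism of formal products. -/
def Hom.component {A B : FormalProd C} (f : A ⟶ B) (j : B.ι) :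
    A.obj (Hom.index f j) ⟶ B.obj j := f.2 j

end FormalProd

variable {C : Type u} [Category.{v} C]

/-- The formal product `∏_{(i,j) ∈ I × J} (A_i ⊔ B_j)`. -/
noncomputable def distribObj [HasColimits C] (I J : Type v) (a : I → C) (b : J → C) : FormalProd C :=
  ⟨I × J, fun p => a p.1 ⨿ b p.2⟩

/-- The inclusion `∏_{i ∈ I} A_i ⟶ ∏_{(i,j) ∈ I × J} (A_i ⊔ B_j)`, with index map
`(i, j) ↦ i` and components the coproduct inclusions `A_i ⟶ A_i ⊔ B_j`. -/
noncomputable def distribInl [HasColimits C] (I J : Type v) (a : I → C) (b : J → C) :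
    (⟨I, a⟩ : FormalProd C) ⟶ distribObj I J a b :=
  ⟨fun p => p.1, fun p => coprod.inl⟩

/-- The inclusion `∏_{j ∈ J} B_j ⟶ ∏_{(i,j) ∈ I × J} (A_i ⊔ B_j)`, with index map
`(i, j) ↦ j` and components the coproduct inclusions `B_j ⟶ A_i ⊔ B_j`. -/
noncomputable def distribInr [HasColimits C] (I J : Type v) (a : I → C) (b : J → C) :
    (⟨J, b⟩ : FormalProd C) ⟶ distribObj I J a b :=
  ⟨fun p => p.2, fun p => coprod.inr⟩

/-- In `Prod(C)` the coproduct distributes over products: the formal product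
`∏_{(i,j) ∈ I × J} (A_i ⊔ B_j)`, equipped with the evident inclusion morphisms,
is a coproduct of `∏_{i ∈ I} A_i` and `∏_{j ∈ J} B_j` in `Prod(C)`; in particular
`(∏_{i∈I} A_i) ⊔ (∏_{j∈J} B_j) ≅ ∏_{(i,j)∈I×J} (A_i ⊔ B_j)`. -/
theorem formalProd_coprod_distrib (C : Type u) [Category.{v} C] [HasColimits C]
    (I J : Type v) (a : I → C) (b : J → C) :
    Nonempty (IsColimit (BinaryCofan.mk (distribInl I J a b) (distribInr I J a b))) := by
  refine ⟨BinaryCofan.IsColimit.mk _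
    (fun {T} f g => ⟨fun k => (f.1 k, g.1 k), fun k => coprod.desc (f.2 k) (g.2 k)⟩)
    (fun {T} f g => ?_) (fun {T} f g => ?_) (fun {T} f g m h1 h2 => ?_)⟩
  · apply Sigma.ext
    · rfl
    · apply heq_of_eq; funext k
      show coprod.inl ≫ coprod.desc (f.2 k) (g.2 k) = f.2 k
      exact coprod.inl_desc _ _
  · apply Sigma.ext
    · rfl
    · apply heq_of_eq; funext k
      show coprod.inr ≫ coprod.desc (f.2 k) (g.2 k) = g.2 k
      exact coprod.inr_desc _ _
  · subst h1 h2
    apply Sigma.ext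
    · rfl
    · apply heq_of_eq; funext k
      show m.2 k = coprod.desc (coprod.inl ≫ m.2 k) (coprod.inr ≫ m.2 k)
      apply coprod.hom_ext
      · exact (coprod.inl_desc _ _).symm
      · exact (coprod.inr_desc _ _).symm
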